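/- Let g : ℝ → ℝ be strictly increasing on (−∞, k] and strictly decreasing on [k, ∞) (so g has a strict global mode at k), and let h : ℝ → ℝ be strictly convex and symmetric about d (h(2d−x) = h(x) for all x). Then: (i) if k ≤ h(d), the composition g∘h attains its global maximum exactly at the single point x = d; (ii) if k > h(d), the global maximizers of g∘h are exactly the points x with h(x) = k, there are exactly two such points, and they are of the form x₀ and 2d − x₀; in particular every mode x of g∘h with x ≠ d satisfies h(x) = k. -/

import Mathlib

open Set

theorem stmt_5 (g h : ℝ → ℝ) (k d : ℝ)
    (hg_inc : StrictMonoOn g (Set.Iic k))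
    (hg_dec : StrictAntiOn g (Set.Ici k))
    (hh_conv : StrictConvexOn ℝ Set.univ h)
    (hh_sym : ∀ x, h (2 * d - x) = h x) :
    (k ≤ h d → {x : ℝ | ∀ y, g (h y) ≤ g (h x)} = {d}) ∧
      (h d < k →
        {x : ℝ | ∀ y, g (h y) ≤ g (h x)} = {x : ℝ | h x = k} ∧
        ∃ x₀ : ℝ, x₀ ≠ d ∧ {x : ℝ | h x = k} = {x₀, 2 * d - x₀} ∧
          x₀ ≠ 2 * d - x₀) ∧
      ∀ x : ℝ, (∀ y, g (h y) ≤ g (h x)) → x ≠ d → h x = k := by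
  -- h has a strict global minimum at d
  have hmin : ∀ x, x ≠ d → h d < h x := by
    intro x hx
    have hne : x ≠ 2 * d - x := by intro h'; apply hx; linarith
    have key := hh_conv.2 (mem_univ x) (mem_univ (2 * d - x)) hne
      (by norm_num : (0:ℝ) < 1/2) (by norm_num : (0:ℝ) < 1/2) (by norm_num)
    rw [hh_sym x] at key
    have hd : (1/2 : ℝ) • x + (1/2 : ℝ) • (2 * d - x) = d := by
      simp only [smul_eq_mul]; ring
    rw [hd] at key
    simp only [smul_eq_mul] at key
    linarith
  -- h is strictly monotone on [d, ∞)
  have hmono : StrictMonoOn h (Ici d) := by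
    intro a ha b hb hab
    rcases eq_or_lt_of_le (mem_Ici.1 ha : d ≤ a) with rfl | had
    · exact hmin b (by linarith)
    · have hbd : h d < h b := hmin b (by linarith)
      have hbdne : (0:ℝ) < b - d := by linarith
      set t := (b - a) / (b - d) with ht
      have ht0 : 0 < t := div_pos (by linarith) hbdne
      have ht1 : t < 1 := (div_lt_one hbdne).2 (by linarith)
      have hdb : d ≠ b := by intro h'; linarith
      have key := hh_conv.2 (mem_univ d) (mem_univ b) hdb ht0
        (by linarith : (0:ℝ) < 1 - t) (by ring)
      have hcomb : t • d + (1 - t) • b = a := by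
        simp only [smul_eq_mul]
        have : t * (b - d) = b - a := by
          rw [ht]; field_simp
        linarith [this]
      rw [hcomb] at key
      simp only [smul_eq_mul] at key
      nlinarith [mul_lt_mul_of_pos_left hbd ht0]
  -- continuity of h
  have hcont : Continuous h := by
    have := hh_conv.convexOn.continuousOn isOpen_univ
    rwa [← continuousOn_univ]
  -- Part 1: k ≤ h d
  have part1 : k ≤ h d → {x : ℝ | ∀ y, g (h y) ≤ g (h x)} = {d} := by
    intro hkd
    ext x
    simp only [mem_setOf_eq, mem_singleton_iff]
    constructor
    · intro hx
      by_contra hxd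
      have h1 : h d < h x := hmin x hxd
      have h2 : g (h x) < g (h d) :=
        hg_dec (by exact hkd : h d ∈ Ici k) (mem_Ici.2 (by linarith)) h1
      linarith [hx d]
    · intro hxd y
      rw [hxd]
      rcases eq_or_ne y d with rfl | hy
      · exact le_refl _
      · have h1 : h d < h y := hmin y hy
        exact le_of_lt (hg_dec (by exact hkd : h d ∈ Ici k)
          (mem_Ici.2 (by linarith)) h1)
  -- Part 2: h d < k
  have part2 : h d < k →
      {x : ℝ | ∀ y, g (h y) ≤ g (h x)} = {x : ℝ | h x = k} ∧
      ∃ x₀ : ℝ, x₀ ≠ d ∧ {x : ℝ | h x = k} = {x₀, 2 * d - x₀} ∧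
        x₀ ≠ 2 * d - x₀ := by
    intro hdk
    -- find x₀ > d with h x₀ = k
    have hs : 0 < h (d + 1) - h d := sub_pos.2 (hmin (d + 1) (by linarith))
    set s := h (d + 1) - h d with hsdef
    set T := max 1 ((k - h d) / s + 1) with hT
    have hT1 : (1:ℝ) ≤ T := le_max_left _ _
    have hT0 : (0:ℝ) < T := by linarith
    have hTk : (k - h d) / s + 1 ≤ T := le_max_right _ _
    have hgrow : k < h (d + T) := by
      have h1T : 1 / T ≤ 1 := by rw [div_le_one hT0]; linarith
      have key := hh_conv.convexOn.2 (mem_univ d) (mem_univ (d + T))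
        (by linarith : (0:ℝ) ≤ 1 - 1 / T) (by positivity : (0:ℝ) ≤ 1 / T)
        (by ring)
      have hcomb : (1 - 1 / T) • d + (1 / T) • (d + T) = d + 1 := by
        have hinv : 1 / T * T = 1 := one_div_mul_cancel (ne_of_gt hT0)
        simp only [smul_eq_mul]
        linear_combination hinv
      rw [hcomb] at key
      simp only [smul_eq_mul] at key
      have hTs : (k - h d) / s * s = k - h d := by field_simp
      have e0 : T * ((1 - 1 / T) * h d + 1 / T * h (d + T))
          = (T - 1) * h d + h (d + T) := by field_simp
      have e1 : T * h (d + 1) ≤ (T - 1) * h d + h (d + T) := by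
        have := mul_le_mul_of_nonneg_left key (le_of_lt hT0)
        linarith [e0 ▸ this]
      have e3 : T * s ≤ h (d + T) - h d := by
        have hts : T * h (d + 1) = T * h d + T * s := by rw [hsdef]; ring
        linarith
      have e2 : k - h d + s ≤ T * s := by
        have := mul_le_mul_of_nonneg_right hTk (le_of_lt hs)
        nlinarith [hTs]
      linarith
    obtain ⟨x₀, hx₀mem, hx₀⟩ := intermediate_value_Icc
      (by linarith : d ≤ d + T) hcont.continuousOn ⟨hdk.le, hgrow.le⟩
    have hx₀d : d < x₀ := by
      rcases eq_or_lt_of_le hx₀mem.1 with rfl | h'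
      · exact absurd hx₀ (by linarith)
      · exact h'
    -- every maximizer x satisfies h x = k and conversely
    have hmaxval : ∀ y, g (h y) ≤ g k := by
      intro y
      rcases le_or_gt (h y) k with hyk | hyk
      · rcases eq_or_lt_of_le hyk with rfl | h'
        · exact le_refl _
        · exact le_of_lt (hg_inc (mem_Iic.2 hyk) (mem_Iic.2 (le_refl _)) h')
      · exact le_of_lt (hg_dec (mem_Ici.2 (le_refl _)) (mem_Ici.2 hyk.le) hyk)
    have hseteq : {x : ℝ | ∀ y, g (h y) ≤ g (h x)} = {x : ℝ | h x = k} := by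
      ext x
      simp only [mem_setOf_eq]
      constructor
      · intro hx
        have h1 : g k ≤ g (h x) := by have := hx x₀; rwa [hx₀] at this
        by_contra hne
        rcases lt_or_gt_of_ne hne with h' | h'
        · exact absurd (hg_inc (mem_Iic.2 h'.le) (mem_Iic.2 (le_refl _)) h')
            (not_lt.2 h1)
        · exact absurd (hg_dec (mem_Ici.2 (le_refl _)) (mem_Ici.2 h'.le) h')
            (not_lt.2 h1)
      · intro hx y
        rw [hx]; exact hmaxval y
    refine ⟨hseteq, x₀, by linarith, ?_, by intro h'; linarith⟩
    ext x
    simp only [mem_setOf_eq, mem_insert_iff, mem_singleton_iff]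
    constructor
    · intro hx
      rcases le_or_gt d x with hdx | hdx
      · left
        exact hmono.injOn (mem_Ici.2 hdx) (mem_Ici.2 hx₀d.le) (by rw [hx, hx₀])
      · right
        have h1 : h (2 * d - x) = k := by rw [hh_sym x]; exact hx
        have h2 : 2 * d - x = x₀ :=
          hmono.injOn (mem_Ici.2 (by linarith)) (mem_Ici.2 hx₀d.le)
            (by rw [h1, hx₀])
        linarith
    · rintro (rfl | rfl)
      · exact hx₀
      · rw [hh_sym x₀]; exact hx₀
  refine ⟨part1, part2, ?_⟩
  intro x hx hxd
  rcases le_or_gt k (h d) with hkd | hdk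
  · exfalso
    have := part1 hkd
    have hxmem : x ∈ {x : ℝ | ∀ y, g (h y) ≤ g (h x)} := hx
    rw [this] at hxmem
    exact hxd hxmem
  · have := (part2 hdk).1
    have hxmem : x ∈ {x : ℝ | ∀ y, g (h y) ≤ g (h x)} := hx
    rw [this] at hxmem
    exact hxmem
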